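/- The function V(R, ω) = (1/2) ωᵀJω + mg(‖ρ‖ − ρᵀRᵀe₃) is nonnegative on SO(3) × ℝ³, vanishes exactly when ω = 0 and Rᵀe₃ = ρ/‖ρ‖, and its time derivative along any solution of the 3D pendulum equations is identically zero. -/

import Mathlib

open Matrix

attribute [local instance] Matrix.frobeniusNormedAddCommGroup Matrix.frobeniusNormedSpace

noncomputable def hat (ω : Fin 3 → ℝ) : Matrix (Fin 3) (Fin 3) ℝ :=
  !![0, -ω 2, ω 1; ω 2, 0, -ω 0; -ω 1, ω 0, 0]

def SO3 : Set (Matrix (Fin 3) (Fin 3) ℝ) := {R | R * Rᵀ = 1 ∧ R.det = 1}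

noncomputable def e3 : Fin 3 → ℝ := ![0, 0, 1]

noncomputable def enorm3 (v : Fin 3 → ℝ) : ℝ := Real.sqrt (v ⬝ᵥ v)

/-- The Lyapunov function `V(R,ω) = (1/2)ωᵀJω + mg(‖ρ‖ − ρᵀRᵀe₃)`. -/
noncomputable def lyap (J : Matrix (Fin 3) (Fin 3) ℝ) (m g : ℝ) (ρ : Fin 3 → ℝ)
    (R : Matrix (Fin 3) (Fin 3) ℝ) (ω : Fin 3 → ℝ) : ℝ :=
  (1/2) * (ω ⬝ᵥ J.mulVec ω) + m * g * (enorm3 ρ - ρ ⬝ᵥ Rᵀ.mulVec e3)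

/-- `V` is nonnegative on `SO(3) × ℝ³`, vanishes exactly on the hanging equilibrium
manifold, and is constant along solutions of the 3D pendulum equations. -/
theorem lyapunov_properties
    (J : Matrix (Fin 3) (Fin 3) ℝ) (hJsymm : J.IsSymm) (hJpos : J.PosDef)
    (m g : ℝ) (hm : 0 < m) (hg : 0 < g) (ρ : Fin 3 → ℝ) (hρ : ρ ≠ 0) :
    (∀ R ∈ SO3, ∀ ω : Fin 3 → ℝ, 0 ≤ lyap J m g ρ R ω)
    ∧ (∀ R ∈ SO3, ∀ ω : Fin 3 → ℝ,
        lyap J m g ρ R ω = 0 ↔ ω = 0 ∧ Rᵀ.mulVec e3 = (enorm3 ρ)⁻¹ • ρ)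
    ∧ (∀ (R : ℝ → Matrix (Fin 3) (Fin 3) ℝ) (ω ω' : ℝ → Fin 3 → ℝ),
        (∀ t, R t ∈ SO3) →
        (∀ t, HasDerivAt ω (ω' t) t) →
        (∀ t, HasDerivAt R (R t * hat (ω t)) t) →
        (∀ t, J.mulVec (ω' t) =
          crossProduct (J.mulVec (ω t)) (ω t)
            + (m * g) • crossProduct ρ ((R t)ᵀ.mulVec e3)) →
        ∀ t : ℝ, HasDerivAt (fun s => lyap J m g ρ (R s) (ω s)) 0 t) := by
  -- basic facts about ρ
  have hρρ : 0 < ρ ⬝ᵥ ρ := by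
    obtain ⟨i, hi⟩ := Function.ne_iff.mp hρ
    have hi' : ρ i ≠ 0 := by simpa using hi
    exact lt_of_lt_of_le (mul_self_pos.mpr hi')
      (Finset.single_le_sum (fun j _ => mul_self_nonneg (ρ j)) (Finset.mem_univ i))
  have hnp : 0 < enorm3 ρ := Real.sqrt_pos.mpr hρρ
  have hsq : enorm3 ρ ^ 2 = ρ ⬝ᵥ ρ := Real.sq_sqrt hρρ.le
  -- the vector Rᵀe₃ is a unit vector
  have hunit : ∀ R ∈ SO3, (Rᵀ.mulVec e3) ⬝ᵥ (Rᵀ.mulVec e3) = 1 := by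
    intro R hR
    have h := congrFun (congrFun hR.1 2) 2
    simp only [Matrix.mul_apply, Matrix.one_apply, transpose_apply, Fin.sum_univ_three] at h
    norm_num at h
    simp only [mulVec, dotProduct, transpose_apply, e3, Fin.sum_univ_three]
    norm_num [Matrix.cons_val_two, Matrix.tail_cons, Matrix.head_cons]
    linear_combination h
  -- Cauchy-Schwarz
  have hCS : ∀ R ∈ SO3, ρ ⬝ᵥ Rᵀ.mulVec e3 ≤ enorm3 ρ := by
    intro R hR
    set v := Rᵀ.mulVec e3 with hv
    have huv := hunit R hR
    have h1 : (ρ ⬝ᵥ v) ^ 2 ≤ ρ ⬝ᵥ ρ := by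
      simp only [dotProduct, Fin.sum_univ_three] at huv ⊢
      nlinarith [sq_nonneg (ρ 0 * v 1 - ρ 1 * v 0), sq_nonneg (ρ 0 * v 2 - ρ 2 * v 0),
        sq_nonneg (ρ 1 * v 2 - ρ 2 * v 1)]
    calc ρ ⬝ᵥ v ≤ |ρ ⬝ᵥ v| := le_abs_self _
      _ = Real.sqrt ((ρ ⬝ᵥ v) ^ 2) := (Real.sqrt_sq_eq_abs _).symm
      _ ≤ enorm3 ρ := Real.sqrt_le_sqrt h1
  have hquad : ∀ ω : Fin 3 → ℝ, 0 ≤ ω ⬝ᵥ J.mulVec ω := by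
    intro ω; simpa using hJpos.posSemidef.dotProduct_mulVec_nonneg ω
  refine ⟨?_, ?_, ?_⟩
  · intro R hR ω
    have := hCS R hR
    have := hquad ω
    unfold lyap
    have h2 : 0 ≤ m * g * (enorm3 ρ - ρ ⬝ᵥ Rᵀ.mulVec e3) :=
      mul_nonneg (mul_pos hm hg).le (by linarith)
    linarith
  · intro R hR ω
    constructor
    · intro h0
      have hq := hquad ω
      have hc := hCS R hR
      unfold lyap at h0
      have h2 : 0 ≤ m * g * (enorm3 ρ - ρ ⬝ᵥ Rᵀ.mulVec e3) :=
        mul_nonneg (mul_pos hm hg).le (by linarith)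
      have hq0 : ω ⬝ᵥ J.mulVec ω = 0 := by linarith
      have hω : ω = 0 := by
        by_contra hω
        exact absurd hq0 (ne_of_gt (by simpa using hJpos.dotProduct_mulVec_pos hω))
      refine ⟨hω, ?_⟩
      have heq : ρ ⬝ᵥ Rᵀ.mulVec e3 = enorm3 ρ := by
        rcases lt_or_eq_of_le hc with hlt | he
        · exfalso
          have : 0 < m * g * (enorm3 ρ - ρ ⬝ᵥ Rᵀ.mulVec e3) :=
            mul_pos (mul_pos hm hg) (by linarith)
          linarith
        · exact he
      set v := Rᵀ.mulVec e3 with hv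
      have huv := hunit R hR
      have hcomm : v ⬝ᵥ ρ = ρ ⬝ᵥ v := dotProduct_comm v ρ
      have hw : ρ - enorm3 ρ • v = 0 := by
        rw [← dotProduct_self_eq_zero]
        simp only [sub_dotProduct, dotProduct_sub, smul_dotProduct, dotProduct_smul,
          smul_eq_mul]
        linear_combination (-1 : ℝ) * hsq + (-2 * enorm3 ρ) * heq
          + (enorm3 ρ)^2 * huv + (-enorm3 ρ) * hcomm
      have hρv : ρ = enorm3 ρ • v := by rwa [sub_eq_zero] at hw
      nth_rewrite 2 [hρv]
      rw [smul_smul, inv_mul_cancel₀ hnp.ne', one_smul]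
    · rintro ⟨hω, hv⟩
      unfold lyap
      have hd : ρ ⬝ᵥ (enorm3 ρ)⁻¹ • ρ = enorm3 ρ := by
        rw [dotProduct_smul, smul_eq_mul, ← hsq]
        field_simp
      rw [hω, hv, hd]
      simp
  · intro R ω ω' hRSO hω hR hdyn t
    have hωc : ∀ i, HasDerivAt (fun s => ω s i) (ω' t i) t :=
      fun i => (hasDerivAt_pi.mp (hω t)) i
    have hRc : ∀ i j : Fin 3, HasDerivAt (fun s => R s i j) ((R t * hat (ω t)) i j) t :=
      fun i j =>
        (Matrix.entryLinearMap ℝ ℝ i j).toContinuousLinearMap.hasFDerivAt.comp_hasDerivAt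
          t (hR t)
    -- rewrite the Lyapunov function in explicit scalar form
    have hfun : (fun s => lyap J m g ρ (R s) (ω s)) = fun s =>
        (1/2) * (ω s 0 * (J 0 0 * ω s 0 + J 0 1 * ω s 1 + J 0 2 * ω s 2)
          + ω s 1 * (J 1 0 * ω s 0 + J 1 1 * ω s 1 + J 1 2 * ω s 2)
          + ω s 2 * (J 2 0 * ω s 0 + J 2 1 * ω s 1 + J 2 2 * ω s 2))
        + m * g * (enorm3 ρ - (ρ 0 * R s 2 0 + ρ 1 * R s 2 1 + ρ 2 * R s 2 2)) := by
      funext s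
      simp only [lyap, dotProduct, Matrix.mulVec, transpose_apply, e3, Fin.sum_univ_three,
        Matrix.cons_val_zero, Matrix.cons_val_one, Matrix.head_cons, Matrix.cons_val_two,
        Matrix.tail_cons]
      ring
    rw [hfun]
    -- derivative of the quadratic part
    have key : ∀ i : Fin 3, HasDerivAt (fun s => J i 0 * ω s 0 + J i 1 * ω s 1 + J i 2 * ω s 2)
        (J i 0 * ω' t 0 + J i 1 * ω' t 1 + J i 2 * ω' t 2) t := fun i =>
      (((hωc 0).const_mul _).add ((hωc 1).const_mul _)).add ((hωc 2).const_mul _)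
    have hA := (((hωc 0).mul (key 0)).add ((hωc 1).mul (key 1))).add ((hωc 2).mul (key 2))
    have hB := (((hRc 2 0).const_mul (ρ 0)).add ((hRc 2 1).const_mul (ρ 1))).add
      ((hRc 2 2).const_mul (ρ 2))
    have hfull := (hA.const_mul (1/2 : ℝ)).add ((hB.const_sub (enorm3 ρ)).const_mul (m * g))
    convert hfull using 1
    · rfl
    · rfl
    · rfl
    -- now prove the derivative is zero
    have hP0 : (R t * hat (ω t)) 2 0 = R t 2 1 * ω t 2 - R t 2 2 * ω t 1 := by
      simp [Matrix.mul_apply, hat, Fin.sum_univ_three]; ring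
    have hP1 : (R t * hat (ω t)) 2 1 = R t 2 2 * ω t 0 - R t 2 0 * ω t 2 := by
      simp [Matrix.mul_apply, hat, Fin.sum_univ_three]; ring
    have hP2 : (R t * hat (ω t)) 2 2 = R t 2 0 * ω t 1 - R t 2 1 * ω t 0 := by
      simp [Matrix.mul_apply, hat, Fin.sum_univ_three]; ring
    have hd := hdyn t
    have hd0 := congrFun hd 0
    have hd1 := congrFun hd 1
    have hd2 := congrFun hd 2
    simp only [Matrix.mulVec, dotProduct, cross_apply, transpose_apply, e3,
      Fin.sum_univ_three, Pi.add_apply, Pi.smul_apply, smul_eq_mul,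
      Matrix.cons_val_zero, Matrix.cons_val_one, Matrix.head_cons, Matrix.cons_val_two,
      Matrix.tail_cons] at hd0 hd1 hd2
    have hs01 : J 0 1 = J 1 0 := by
      have := congrFun (congrFun hJsymm 0) 1
      simpa [Matrix.transpose_apply] using this.symm
    have hs02 : J 0 2 = J 2 0 := by
      have := congrFun (congrFun hJsymm 0) 2
      simpa [Matrix.transpose_apply] using this.symm
    have hs12 : J 1 2 = J 2 1 := by
      have := congrFun (congrFun hJsymm 1) 2
      simpa [Matrix.transpose_apply] using this.symm
    rw [hP0, hP1, hP2]
    linear_combination (-(ω t 0)) * hd0 + (-(ω t 1)) * hd1 + (-(ω t 2)) * hd2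
      + ((ω t 0 * ω' t 1 - ω t 1 * ω' t 0)/2) * hs01
      + ((ω t 0 * ω' t 2 - ω t 2 * ω' t 0)/2) * hs02
      + ((ω t 1 * ω' t 2 - ω t 2 * ω' t 1)/2) * hs12
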